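/- Let G = (N, A) be a finite directed graph with source s, sink t, and nonnegative capacities, and let f be a maximum s-t flow. Form G' by adding a single arc (i,j) ∉ A with positive capacity. If the maximum flow value of G' is strictly greater than that of G, then in the residual graph D_f of f there exists a directed path from s to i and a directed path from j to t. -/

import Mathlib

/-- A capacitated directed network: `A` is the arc relation, `u` the capacities
(zero off the arc set). -/
structure FlowNetwork (V : Type*) where
  A : V → V → Prop
  u : V → V → ℝ
  cap_nonneg : ∀ i j, 0 ≤ u i j
  cap_zero : ∀ i j, ¬ A i j → u i j = 0

/-- `f` is a feasible `s`-`t` flow in `N`. -/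
structure IsFlow {V : Type*} [Fintype V] (N : FlowNetwork V) (s t : V)
    (f : V → V → ℝ) : Prop where
  nonneg : ∀ i j, 0 ≤ f i j
  le_cap : ∀ i j, f i j ≤ N.u i j
  conserve : ∀ v, v ≠ s → v ≠ t → (∑ w, f v w) = (∑ w, f w v)

/-- The value of a flow: the net flow out of the source `s`. -/
noncomputable def flowValue {V : Type*} [Fintype V] (f : V → V → ℝ) (s : V) : ℝ :=
  (∑ w, f s w) - (∑ w, f w s)

/-- `f` is a maximum `s`-`t` flow in `N`. -/
def IsMaxFlow {V : Type*} [Fintype V] (N : FlowNetwork V) (s t : V)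
    (f : V → V → ℝ) : Prop :=
  IsFlow N s t f ∧ ∀ g, IsFlow N s t g → flowValue g s ≤ flowValue f s

/-- Arc of the residual (auxiliary) graph `D_f`: a forward arc where flow is
below capacity, or a backward arc where flow is positive. -/
def ResidualArc {V : Type*} (N : FlowNetwork V) (f : V → V → ℝ) (i j : V) : Prop :=
  (N.A i j ∧ f i j < N.u i j) ∨ (N.A j i ∧ 0 < f j i)

/-- Reachability in the residual graph `D_f`. -/
def Reaches {V : Type*} (N : FlowNetwork V) (f : V → V → ℝ) (a b : V) : Prop :=
  Relation.ReflTransGen (ResidualArc N f) a b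

/-- The network obtained by adding the new arc `(i,j)` with capacity `c`. -/
def addArc {V : Type*} [DecidableEq V] (N : FlowNetwork V) (i j : V) (c : ℝ)
    (hc : 0 ≤ c) : FlowNetwork V where
  A a b := N.A a b ∨ (a = i ∧ b = j)
  u a b := if a = i ∧ b = j then c else N.u a b
  cap_nonneg a b := by
    try dsimp only
    split
    · exact hc
    · exact N.cap_nonneg a b
  cap_zero a b h := by
    try dsimp only
    rw [if_neg (fun hab => h (Or.inr hab))]
    exact N.cap_zero a b (fun hA => h (Or.inl hA))

/-- The network obtained by simultaneously adding the arcs of `I`, arc `a ∈ I`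
getting capacity `c a`. -/
def addArcs {V : Type*} [DecidableEq V] (N : FlowNetwork V) (I : Finset (V × V))
    (c : V × V → ℝ) (hc : ∀ a ∈ I, 0 ≤ c a) : FlowNetwork V where
  A a b := N.A a b ∨ (a, b) ∈ I
  u a b := if (a, b) ∈ I then c (a, b) else N.u a b
  cap_nonneg a b := by
    try dsimp only
    split
    · next h => exact hc _ h
    · exact N.cap_nonneg a b
  cap_zero a b h := by
    try dsimp only
    rw [if_neg (fun hab => h (Or.inr hab))]
    exact N.cap_zero a b (fun hA => h (Or.inl hA))



section Aux

variable {V : Type*} [Fintype V] [DecidableEq V]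

/-- Excess (inflow minus outflow) at a node. -/
noncomputable def excess (g : V → V → ℝ) (w : V) : ℝ :=
  (∑ x, g x w) - (∑ x, g w x)

lemma sum_ite_pair (p q w : V) (ε : ℝ) :
    (∑ x, if x = p ∧ w = q then ε else 0) = if w = q then ε else 0 := by
  by_cases hw : w = q
  · simp [hw]
  · simp [hw]

lemma aug_core (N : FlowNetwork V) (t : V)
    (f : V → V → ℝ) (hnn : ∀ a b, 0 ≤ f a b) (hcap : ∀ a b, f a b ≤ N.u a b)
    (v : V) (h : Reaches N f v t) :
    ∃ ε0 : ℝ, 0 < ε0 ∧ ∃ C : ℝ, ∀ ε : ℝ, 0 < ε → ε ≤ ε0 →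
      ∃ g : V → V → ℝ, (∀ a b, 0 ≤ g a b) ∧ (∀ a b, g a b ≤ N.u a b) ∧
        (∀ a b, |g a b - f a b| ≤ C * ε) ∧
        (∀ w, excess g w =
          excess f w + (if w = t then ε else 0) - (if w = v then ε else 0)) := by
  induction h using Relation.ReflTransGen.head_induction_on with
  | refl =>
      exact ⟨1, one_pos, 0, fun ε hε _ => ⟨f, hnn, hcap, fun a b => by simp, fun w => by ring⟩⟩
  | @head a b harc hrest ih =>
      obtain ⟨ε0', hε0', C', hIH⟩ := ih
      obtain ⟨C, hCdef⟩ : ∃ C : ℝ, C = |C'| + 1 := ⟨_, rfl⟩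
      have hCpos : 0 < C := by rw [hCdef]; positivity
      have hC'le : C' ≤ C := by
        have := le_abs_self C'; rw [hCdef]; linarith
      have h1C : C' + 1 ≤ C := by
        have := le_abs_self C'; rw [hCdef]; linarith
      rcases harc with ⟨hA, hlt⟩ | ⟨hA, hpos⟩
      · -- forward arc a → b : increase flow on (a,b)
        have hδ : 0 < N.u a b - f a b := by linarith
        refine ⟨min ε0' ((N.u a b - f a b) / (2 * C)), lt_min hε0' (by positivity), C, ?_⟩
        intro ε hε hεle
        have hε1 : ε ≤ ε0' := le_trans hεle (min_le_left _ _)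
        have hε2 : ε ≤ (N.u a b - f a b) / (2 * C) := le_trans hεle (min_le_right _ _)
        have hCε : C * ε ≤ (N.u a b - f a b) / 2 := by
          rw [le_div_iff₀ (by positivity)] at hε2
          nlinarith
        have hmul : C' * ε + ε ≤ C * ε := by
          nlinarith [mul_le_mul_of_nonneg_right h1C hε.le]
        obtain ⟨g', hg1, hg2, hg3, hg4⟩ := hIH ε hε hε1
        set g : V → V → ℝ := fun x y => g' x y + (if x = a ∧ y = b then ε else 0) with hgdef
        have hgpt : ∀ x y, g x y = g' x y + (if x = a ∧ y = b then ε else 0) := fun x y => rfl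
        refine ⟨g, ?_, ?_, ?_, ?_⟩
        · intro x y
          rw [hgpt]
          have := hg1 x y
          split_ifs <;> linarith
        · intro x y
          rw [hgpt]
          have h2 := hg2 x y
          have h3 := abs_le.mp (hg3 x y)
          split_ifs with hxy
          · obtain ⟨rfl, rfl⟩ := hxy
            linarith [h3.1, h3.2, hmul, hCε]
          · linarith
        · intro x y
          rw [hgpt]
          have h3 := abs_le.mp (hg3 x y)
          rw [abs_le]
          split_ifs with hxy
          · constructor
            · linarith [h3.1, hmul]
            · linarith [h3.2, hmul]
          · rw [add_zero]
            constructor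
            · linarith [h3.1, hmul]
            · linarith [h3.2, hmul]
        · intro w
          have hin : (∑ x, g x w) = (∑ x, g' x w) + (if w = b then ε else 0) := by
            simp only [hgpt]
            rw [Finset.sum_add_distrib, sum_ite_pair]
          have hout : (∑ x, g w x) = (∑ x, g' w x) + (if w = a then ε else 0) := by
            simp only [hgpt]
            rw [Finset.sum_add_distrib]
            congr 1
            by_cases hw : w = a
            · simp [hw]
            · simp [hw]
          have h4 := hg4 w
          unfold excess at h4 ⊢
          rw [hin, hout]
          linarith
      · -- backward arc : decrease flow on (b,a)
        have hδ : 0 < f b a := hpos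
        refine ⟨min ε0' (f b a / (2 * C)), lt_min hε0' (by positivity), C, ?_⟩
        intro ε hε hεle
        have hε1 : ε ≤ ε0' := le_trans hεle (min_le_left _ _)
        have hε2 : ε ≤ f b a / (2 * C) := le_trans hεle (min_le_right _ _)
        have hCε : C * ε ≤ f b a / 2 := by
          rw [le_div_iff₀ (by positivity)] at hε2
          nlinarith
        have hmul : C' * ε + ε ≤ C * ε := by
          nlinarith [mul_le_mul_of_nonneg_right h1C hε.le]
        obtain ⟨g', hg1, hg2, hg3, hg4⟩ := hIH ε hε hε1
        set g : V → V → ℝ := fun x y => g' x y - (if x = b ∧ y = a then ε else 0) with hgdef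
        have hgpt : ∀ x y, g x y = g' x y - (if x = b ∧ y = a then ε else 0) := fun x y => rfl
        refine ⟨g, ?_, ?_, ?_, ?_⟩
        · intro x y
          rw [hgpt]
          have h1 := hg1 x y
          have h3 := abs_le.mp (hg3 x y)
          split_ifs with hxy
          · obtain ⟨rfl, rfl⟩ := hxy
            linarith [h3.1, h3.2, hmul, hCε]
          · linarith
        · intro x y
          rw [hgpt]
          have := hg2 x y
          split_ifs <;> linarith
        · intro x y
          rw [hgpt]
          have h3 := abs_le.mp (hg3 x y)
          rw [abs_le]
          split_ifs with hxy
          · constructor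
            · linarith [h3.1, hmul]
            · linarith [h3.2, hmul]
          · rw [sub_zero]
            constructor
            · linarith [h3.1, hmul]
            · linarith [h3.2, hmul]
        · intro w
          have hin : (∑ x, g x w) = (∑ x, g' x w) - (if w = a then ε else 0) := by
            simp only [hgpt]
            rw [Finset.sum_sub_distrib, sum_ite_pair]
          have hout : (∑ x, g w x) = (∑ x, g' w x) - (if w = b then ε else 0) := by
            simp only [hgpt]
            rw [Finset.sum_sub_distrib]
            congr 1
            by_cases hw : w = b
            · simp [hw]
            · simp [hw]
          have h4 := hg4 w
          unfold excess at h4 ⊢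
          rw [hin, hout]
          linarith

/-- If there is a residual path from `s` to `t`, the flow is not maximum. -/
lemma exists_better (N : FlowNetwork V) (s t : V) (hst : s ≠ t)
    (f : V → V → ℝ) (hf : IsFlow N s t f) (hr : Reaches N f s t) :
    ∃ g, IsFlow N s t g ∧ flowValue f s < flowValue g s := by
  obtain ⟨ε0, hε0, C, hC⟩ := aug_core N t f hf.nonneg hf.le_cap s hr
  obtain ⟨g, hg1, hg2, _, hg4⟩ := hC ε0 hε0 le_rfl
  refine ⟨g, ⟨hg1, hg2, ?_⟩, ?_⟩
  · intro w hws hwt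
    have h := hg4 w
    rw [if_neg hwt, if_neg hws] at h
    have hf0 : (∑ x, f w x) = (∑ x, f x w) := hf.conserve w hws hwt
    unfold excess at h
    linarith
  · have h := hg4 s
    rw [if_neg hst, if_pos rfl] at h
    unfold excess at h
    unfold flowValue
    linarith

lemma not_reaches_of_max (N : FlowNetwork V) (s t : V) (hst : s ≠ t)
    (f : V → V → ℝ) (hf : IsMaxFlow N s t f) : ¬ Reaches N f s t := by
  intro hr
  obtain ⟨g, hg, hlt⟩ := exists_better N s t hst f hf.1 hr
  linarith [hf.2 g hg]

lemma value_eq_cutflow (M : FlowNetwork V) (s t : V) (g : V → V → ℝ)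
    (hg : IsFlow M s t g) (S : Finset V) (hs : s ∈ S) (ht : t ∉ S) :
    flowValue g s = ∑ v ∈ S, ∑ w ∈ Sᶜ, (g v w - g w v) := by
  have hval : flowValue g s = ∑ v ∈ S, ((∑ w, g v w) - (∑ w, g w v)) := by
    rw [Finset.sum_eq_single_of_mem s hs]
    · rfl
    · intro v hv hvs
      have := hg.conserve v hvs (fun h => ht (h ▸ hv))
      linarith
  rw [hval]
  have h1 : (∑ v ∈ S, ∑ w ∈ S, g v w) = ∑ v ∈ S, ∑ w ∈ S, g w v := Finset.sum_comm
  have h2 : ∀ v : V, (∑ w, g v w) = (∑ w ∈ S, g v w) + ∑ w ∈ Sᶜ, g v w :=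
    fun v => (Finset.sum_add_sum_compl S _).symm
  have h3 : ∀ v : V, (∑ w, g w v) = (∑ w ∈ S, g w v) + ∑ w ∈ Sᶜ, g w v :=
    fun v => (Finset.sum_add_sum_compl S _).symm
  calc (∑ v ∈ S, ((∑ w, g v w) - (∑ w, g w v)))
      = ∑ v ∈ S, (((∑ w ∈ S, g v w) + ∑ w ∈ Sᶜ, g v w)
          - ((∑ w ∈ S, g w v) + ∑ w ∈ Sᶜ, g w v)) := by
        apply Finset.sum_congr rfl
        intro v _
        rw [h2 v, h3 v]
    _ = ((∑ v ∈ S, ∑ w ∈ S, g v w) - ∑ v ∈ S, ∑ w ∈ S, g w v)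
        + ∑ v ∈ S, ((∑ w ∈ Sᶜ, g v w) - ∑ w ∈ Sᶜ, g w v) := by
        simp only [Finset.sum_sub_distrib, Finset.sum_add_distrib]
        ring
    _ = ∑ v ∈ S, ((∑ w ∈ Sᶜ, g v w) - ∑ w ∈ Sᶜ, g w v) := by
        rw [h1]; ring
    _ = ∑ v ∈ S, ∑ w ∈ Sᶜ, (g v w - g w v) := by
        apply Finset.sum_congr rfl
        intro v _
        rw [Finset.sum_sub_distrib]

lemma cut_bound (M : FlowNetwork V) (s t : V) (g : V → V → ℝ)
    (hg : IsFlow M s t g) (S : Finset V) (hs : s ∈ S) (ht : t ∉ S) :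
    flowValue g s ≤ ∑ v ∈ S, ∑ w ∈ Sᶜ, M.u v w := by
  rw [value_eq_cutflow M s t g hg S hs ht]
  apply Finset.sum_le_sum
  intro v _
  apply Finset.sum_le_sum
  intro w _
  have := hg.le_cap v w
  have := hg.nonneg w v
  linarith

lemma cut_eq (N : FlowNetwork V) (s t : V) (f : V → V → ℝ)
    (hf : IsFlow N s t f) (S : Finset V) (hs : s ∈ S) (ht : t ∉ S)
    (hsat : ∀ v ∈ S, ∀ w ∈ Sᶜ, ¬ ResidualArc N f v w) :
    flowValue f s = ∑ v ∈ S, ∑ w ∈ Sᶜ, N.u v w := by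
  rw [value_eq_cutflow N s t f hf S hs ht]
  apply Finset.sum_congr rfl
  intro v hv
  apply Finset.sum_congr rfl
  intro w hw
  have hres := hsat v hv w hw
  have h1 : f v w = N.u v w := by
    rcases lt_or_eq_of_le (hf.le_cap v w) with h | h
    · by_cases hA : N.A v w
      · exact absurd (Or.inl ⟨hA, h⟩) hres
      · have := N.cap_zero v w hA
        have := hf.nonneg v w
        linarith
    · exact h
  have h2 : f w v = 0 := by
    rcases lt_or_eq_of_le (hf.nonneg w v) with h | h
    · by_cases hA : N.A w v
      · exact absurd (Or.inr ⟨hA, h⟩) hres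
      · have := N.cap_zero w v hA
        have := hf.le_cap w v
        linarith
    · exact h.symm
  rw [h1, h2]
  ring

end Aux

/-- if adding the single new arc `(i,j)` with positive capacity
strictly increases the maximum flow value, then in the residual graph of the
original maximum flow `f` the node `i` is reachable from `s` and `t` is
reachable from `j`. -/
theorem stmt10 {V : Type*} [Fintype V] [DecidableEq V]
    (N : FlowNetwork V) (s t : V) (hst : s ≠ t)
    (f : V → V → ℝ) (hf : IsMaxFlow N s t f)
    (i j : V) (hij : ¬ N.A i j) (c : ℝ) (hc : 0 < c)
    (f' : V → V → ℝ) (hf' : IsMaxFlow (addArc N i j c hc.le) s t f')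
    (hgt : flowValue f s < flowValue f' s) :
    Reaches N f s i ∧ Reaches N f j t := by
  classical
  by_contra hcon
  rw [not_and_or] at hcon
  have hnst : ¬ Reaches N f s t := not_reaches_of_max N s t hst f hf
  rcases hcon with hni | hnjt
  · -- Case A: i not reachable from s
    set S : Finset V := Finset.univ.filter (fun v => Reaches N f s v) with hSdef
    have hmem : ∀ v, v ∈ S ↔ Reaches N f s v := by
      intro v; simp [hSdef]
    have hs : s ∈ S := (hmem s).mpr Relation.ReflTransGen.refl
    have ht : t ∉ S := fun h => hnst ((hmem t).mp h)
    have hsat : ∀ v ∈ S, ∀ w ∈ Sᶜ, ¬ ResidualArc N f v w := by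
      intro v hv w hw hres
      exact (Finset.mem_compl.mp hw) ((hmem w).mpr (((hmem v).mp hv).tail hres))
    have hiS : i ∉ S := fun h => hni ((hmem i).mp h)
    have hb := cut_bound (addArc N i j c hc.le) s t f' hf'.1 S hs ht
    have heq : (∑ v ∈ S, ∑ w ∈ Sᶜ, (addArc N i j c hc.le).u v w)
        = ∑ v ∈ S, ∑ w ∈ Sᶜ, N.u v w := by
      apply Finset.sum_congr rfl
      intro v hv
      apply Finset.sum_congr rfl
      intro w _
      show (if v = i ∧ w = j then c else N.u v w) = N.u v w
      rw [if_neg (show ¬(v = i ∧ w = j) by rintro ⟨rfl, rfl⟩; exact hiS hv)]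
    have hce := cut_eq N s t f hf.1 S hs ht hsat
    rw [heq, ← hce] at hb
    linarith
  · -- Case B: t not reachable from j
    set S : Finset V := Finset.univ.filter (fun v => ¬ Reaches N f v t) with hSdef
    have hmem : ∀ v, v ∈ S ↔ ¬ Reaches N f v t := by
      intro v; simp [hSdef]
    have hs : s ∈ S := (hmem s).mpr hnst
    have ht : t ∉ S := fun h => (hmem t).mp h Relation.ReflTransGen.refl
    have hsat : ∀ v ∈ S, ∀ w ∈ Sᶜ, ¬ ResidualArc N f v w := by
      intro v hv w hw hres
      have hwreach : Reaches N f w t := by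
        by_contra h
        exact (Finset.mem_compl.mp hw) ((hmem w).mpr h)
      exact ((hmem v).mp hv) (Relation.ReflTransGen.head hres hwreach)
    have hjS : j ∈ S := (hmem j).mpr hnjt
    have hb := cut_bound (addArc N i j c hc.le) s t f' hf'.1 S hs ht
    have heq : (∑ v ∈ S, ∑ w ∈ Sᶜ, (addArc N i j c hc.le).u v w)
        = ∑ v ∈ S, ∑ w ∈ Sᶜ, N.u v w := by
      apply Finset.sum_congr rfl
      intro v _
      apply Finset.sum_congr rfl
      intro w hw
      show (if v = i ∧ w = j then c else N.u v w) = N.u v w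
      rw [if_neg (show ¬(v = i ∧ w = j) by rintro ⟨rfl, rfl⟩; exact (Finset.mem_compl.mp hw) hjS)]
    have hce := cut_eq N s t f hf.1 S hs ht hsat
    rw [heq, ← hce] at hb
    linarith
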